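/- arXiv:2504.00553 — 3 statements merged into one kernel-verified Lean document; each statement's English description precedes it below -/
import Mathlib

section
/- For every natural number M there exists a finite tree T with S_b(T) − S(T) > M; that is, the difference between the star b-chromatic number and the star chromatic number is unbounded on the class of trees. (In fact, for every n ≥ 1 there is a tree T_n with S_b(T_n) = 2n + 2 and S(T_n) ≤ 3.) -/
/-!
Definitions for star colorings, star recoloring steps, the strict partial order `≺ₛ`,
star b-vertices, the star (b-)chromatic number, star degrees and related notions,
following Božović, Mesarič Štesl, Peterin,
"On star b-chromatic number of a graph".
-/

variable {V : Type*}

/-- A proper coloring which is a *star coloring*: no path on four vertices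
(vertices `a-b-x-y` with the three edges `ab`, `bx`, `xy`) is bicolored,
i.e. the union of any two color classes induces a star forest. -/
def IsStarColoring (G : SimpleGraph V) (c : V → ℕ) : Prop :=
  (∀ ⦃u w⦄, G.Adj u w → c u ≠ c w) ∧
  ∀ a b x y : V, G.Adj a b → G.Adj b x → G.Adj x y →
    a ≠ x → b ≠ y → a ≠ y → ¬(c a = c x ∧ c b = c y)

/-- The set of colors used by a coloring. -/
def colorsUsed [Fintype V] (c : V → ℕ) : Finset ℕ :=
  Finset.image c Finset.univ

/-- `c'` is obtained from `c` by a *star recoloring step*: some color class `Vᵢ`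
of the star coloring `c` is completely recolored, each of its vertices receiving one
of the remaining colors of `c`, so that the result `c'` is again a star coloring
(using the colors of `c` minus `i`). We write `c' ⊲ₛ c`. -/
def StarRecolorStep [Fintype V] (G : SimpleGraph V) (c' c : V → ℕ) : Prop :=
  IsStarColoring G c ∧ IsStarColoring G c' ∧
  ∃ i ∈ colorsUsed c,
    (∀ v, c v ≠ i → c' v = c v) ∧
    ∀ v, c v = i → c' v ≠ i ∧ c' v ∈ colorsUsed c

/-- A minimal element of the strict partial order `≺ₛ` (the transitive closure of
the star recoloring step relation `⊲ₛ`): a star coloring on which no star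
recoloring step can be performed. -/
def IsStarBColoring [Fintype V] (G : SimpleGraph V) (c : V → ℕ) : Prop :=
  IsStarColoring G c ∧ ∀ c', ¬ StarRecolorStep G c' c

/-- The *star b-chromatic number* `Sᵦ(G)`: the maximum number of colors used by a
minimal element of `≺ₛ`. -/
noncomputable def starBChromaticNumber [Fintype V] (G : SimpleGraph V) : ℕ :=
  sSup {n | ∃ c : V → ℕ, IsStarBColoring G c ∧ (colorsUsed c).card = n}

/-- The *star chromatic number* `S(G)`: the minimum number of colors in a star coloring. -/
noncomputable def starChromaticNumber [Fintype V] (G : SimpleGraph V) : ℕ :=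
  sInf {n | ∃ c : V → ℕ, IsStarColoring G c ∧ (colorsUsed c).card = n}

/-- A color `j` is *blocked* for the vertex `v` under the star coloring `c`
if `j` is the color of `v` itself, or recoloring `v` alone with `j` destroys
the star coloring property. -/
def ColorBlockedFor [DecidableEq V] (G : SimpleGraph V) (c : V → ℕ) (v : V) (j : ℕ) : Prop :=
  j = c v ∨ ¬ IsStarColoring G (Function.update c v j)

/-- A color of `c` which is not blocked for `v` is *available* for `v`. -/
def ColorAvailableFor [Fintype V] [DecidableEq V] (G : SimpleGraph V) (c : V → ℕ)
    (v : V) (j : ℕ) : Prop :=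
  j ∈ colorsUsed c ∧ ¬ ColorBlockedFor G c v j

/-- `u-b-x-w` is an induced path on four vertices of `G`. -/
def IsInducedP4 (G : SimpleGraph V) (u b x w : V) : Prop :=
  G.Adj u b ∧ G.Adj b x ∧ G.Adj x w ∧
  ¬ G.Adj u x ∧ ¬ G.Adj b w ∧ ¬ G.Adj u w ∧
  u ≠ x ∧ b ≠ w ∧ u ≠ w

/-- The relation `~ᵢ` on a color class: two vertices of the same color joined
by an induced path on four vertices. -/
def P4Rel (G : SimpleGraph V) (c : V → ℕ) (u w : V) : Prop :=
  c u = c w ∧ ∃ b x, IsInducedP4 G u b x w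

/-- The `P₄`-system of `v`: its equivalence class under the
reflexive-transitive closure of `~ᵢ`. -/
def P4System (G : SimpleGraph V) (c : V → ℕ) (v : V) : Set V :=
  {u | Relation.ReflTransGen (P4Rel G c) v u}

/-- An available color `j` for `v` is *blocked for the `P₄`-system of `v`* if every
recoloring of the color class of `v` (each vertex receiving an available color)
in which `v` is recolored by `j` yields a bicolored path on four vertices between
two vertices of the `P₄`-system of `v`. -/
def BlockedForP4System [Fintype V] [DecidableEq V] (G : SimpleGraph V) (c : V → ℕ)
    (v : V) (j : ℕ) : Prop :=
  ∀ c' : V → ℕ,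
    (∀ u, c u ≠ c v → c' u = c u) →
    (∀ u, c u = c v → ColorAvailableFor G c u (c' u)) →
    c' v = j →
    ∃ u w b x, u ∈ P4System G c v ∧ w ∈ P4System G c v ∧
      G.Adj u b ∧ G.Adj b x ∧ G.Adj x w ∧ u ≠ x ∧ b ≠ w ∧ u ≠ w ∧
      c' u = c' x ∧ c' b = c' w

/-- A *star b-vertex*: every available color for `v` is blocked for its `P₄`-system. -/
def IsStarBVertex [Fintype V] [DecidableEq V] (G : SimpleGraph V) (c : V → ℕ) (v : V) : Prop :=
  ∀ j, ColorAvailableFor G c v j → BlockedForP4System G c v j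

/-- The *star degree* `dˢ_G(v)` of a vertex: the maximum number of colors blocked
for `v` over all star colorings of `G`. -/
noncomputable def starDegree [Fintype V] [DecidableEq V] (G : SimpleGraph V) (v : V) : ℕ :=
  sSup {n | ∃ c : V → ℕ, IsStarColoring G c ∧
    {j | j ∈ colorsUsed c ∧ ColorBlockedFor G c v j}.ncard = n}

/-- The `mₛ`-degree of a graph: the largest `k` such that `G` has `k` vertices
of star degree at least `k - 1` (equivalently, with the vertices ordered by
non-increasing star degree, `mₛ(G) = max {i : i - 1 ≤ dˢ_G(vᵢ)}`). -/
noncomputable def msDegree [Fintype V] [DecidableEq V] (G : SimpleGraph V) : ℕ :=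
  sSup {k | ∃ s : Finset V, s.card = k ∧ ∀ v ∈ s, k - 1 ≤ starDegree G v}

/-- The maximum degree `Δ(G)` of a graph. -/
noncomputable def maxDeg (G : SimpleGraph V) : ℕ :=
  sSup {d | ∃ v : V, (G.neighborSet v).ncard = d}

/-- The *b-chromatic number* `φ(G)`: the maximum number of colors of a proper coloring
in which every color class contains a vertex whose closed neighborhood contains
all the colors. -/
noncomputable def bChromaticNumber [Fintype V] (G : SimpleGraph V) : ℕ :=
  sSup {k | ∃ c : V → ℕ, (∀ ⦃u w⦄, G.Adj u w → c u ≠ c w) ∧ (colorsUsed c).card = k ∧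
    ∀ i ∈ colorsUsed c, ∃ v, c v = i ∧
      ∀ j ∈ colorsUsed c, ∃ u, (u = v ∨ G.Adj v u) ∧ c u = j}

/-- The join `G ∨ H` of two simple graphs: disjoint union of `G` and `H`
together with all edges between the two vertex sets. -/
def graphJoin {α β : Type*} (G : SimpleGraph α) (H : SimpleGraph β) :
    SimpleGraph (α ⊕ β) where
  Adj x y :=
    (∃ a b, x = Sum.inl a ∧ y = Sum.inl b ∧ G.Adj a b) ∨
    (∃ a b, x = Sum.inr a ∧ y = Sum.inr b ∧ H.Adj a b) ∨
    (∃ a b, x = Sum.inl a ∧ y = Sum.inr b) ∨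
    (∃ a b, x = Sum.inr a ∧ y = Sum.inl b)
  symm := by
    constructor
    rintro x y (⟨a,b,rfl,rfl,h⟩|⟨a,b,rfl,rfl,h⟩|⟨a,b,rfl,rfl⟩|⟨a,b,rfl,rfl⟩)
    · exact Or.inl ⟨b, a, rfl, rfl, h.symm⟩
    · exact Or.inr (Or.inl ⟨b, a, rfl, rfl, h.symm⟩)
    · exact Or.inr (Or.inr (Or.inr ⟨b, a, rfl, rfl⟩))
    · exact Or.inr (Or.inr (Or.inl ⟨b, a, rfl, rfl⟩))
  loopless := by
    constructor
    rintro x (⟨a,b,h1,h2,h⟩|⟨a,b,h1,h2,h⟩|⟨a,b,h1,h2⟩|⟨a,b,h1,h2⟩) <;> subst h1 <;>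
      simp_all [SimpleGraph.irrefl]

/-- `N₂(v)`: vertices at distance exactly two from `v`. -/
def distTwoSet (G : SimpleGraph V) (v : V) : Set V := {u | G.dist v u = 2}

/-- `N₃(v)`: vertices at distance exactly three from `v`. -/
def distThreeSet (G : SimpleGraph V) (v : V) : Set V := {u | G.dist v u = 3}

/-- `X(v)`: vertices at distance two from `v` with no neighbor at distance three from `v`. -/
def XSet (G : SimpleGraph V) (v : V) : Set V :=
  {u | u ∈ distTwoSet G v ∧ ∀ w ∈ distThreeSet G v, ¬ G.Adj u w}

/-- `Y(v)`: vertices at distance two from `v` having a neighbor at distance three from `v`. -/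
def YSet (G : SimpleGraph V) (v : V) : Set V := distTwoSet G v \ XSet G v

/-! ### Auxiliary development: the spider tree with `k` legs of length two -/

section SpiderAux

open Finset

/-- The spider with `k` legs of length two, on vertex values `0` (center),
`1..k` (tops), `k+1..2k` (bottoms): adjacency on values. -/
def spiderAdj (k u w : ℕ) : Prop :=
  (u = 0 ∧ 1 ≤ w ∧ w ≤ k) ∨ (w = 0 ∧ 1 ≤ u ∧ u ≤ k) ∨
  (1 ≤ u ∧ u ≤ k ∧ w = u + k) ∨ (1 ≤ w ∧ w ≤ k ∧ u = w + k)

/-- The spider graph. -/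
def spider (k : ℕ) : SimpleGraph (Fin (2*k+1)) where
  Adj u w := spiderAdj k u.val w.val
  symm := by constructor; unfold spiderAdj; tauto
  loopless := by constructor; intro u h; unfold spiderAdj at h; omega

lemma spider_adj {k : ℕ} {u w : Fin (2*k+1)} :
    (spider k).Adj u w ↔
      ((u.val = 0 ∧ 1 ≤ w.val ∧ w.val ≤ k) ∨ (w.val = 0 ∧ 1 ≤ u.val ∧ u.val ≤ k) ∨
       (1 ≤ u.val ∧ u.val ≤ k ∧ w.val = u.val + k) ∨
       (1 ≤ w.val ∧ w.val ≤ k ∧ u.val = w.val + k)) := Iff.rfl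

/-- Characterization of star colorings of the spider. -/
def SpiderStar (k : ℕ) (c : Fin (2*k+1) → ℕ) : Prop :=
  (∀ t z : Fin (2*k+1), 1 ≤ t.val → t.val ≤ k → z.val = 0 → c t ≠ c z) ∧
  (∀ t b : Fin (2*k+1), 1 ≤ t.val → t.val ≤ k → b.val = t.val + k → c b ≠ c t) ∧
  (∀ t t' b z : Fin (2*k+1), 1 ≤ t.val → t.val ≤ k → 1 ≤ t'.val → t'.val ≤ k →
      t.val ≠ t'.val → c t = c t' → b.val = t.val + k → z.val = 0 → c b ≠ c z)

lemma isStarColoring_spider_iff {k : ℕ} (c : Fin (2*k+1) → ℕ) :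
    IsStarColoring (spider k) c ↔ SpiderStar k c := by
  constructor
  · rintro ⟨hp, h4⟩
    refine ⟨?_, ?_, ?_⟩
    · intro t z h1 h2 h0
      exact hp (spider_adj.mpr (Or.inr (Or.inl ⟨h0, h1, h2⟩)))
    · intro t b h1 h2 hb
      exact (hp (spider_adj.mpr (Or.inr (Or.inr (Or.inl ⟨h1, h2, hb⟩))))).symm
    · intro t t' b z h1 h2 h1' h2' hne hc hb h0 hbz
      refine h4 t' z t b (spider_adj.mpr (Or.inr (Or.inl ⟨h0, h1', h2'⟩)))
        (spider_adj.mpr (Or.inl ⟨h0, h1, h2⟩))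
        (spider_adj.mpr (Or.inr (Or.inr (Or.inl ⟨h1, h2, hb⟩))))
        (fun h => hne (by rw [h])) (fun h => ?_) (fun h => ?_) ⟨hc.symm, hbz.symm⟩
      · apply_fun Fin.val at h; omega
      · apply_fun Fin.val at h; omega
  · rintro ⟨h1, h2, h3⟩
    constructor
    · intro u w hadj
      rcases spider_adj.mp hadj with ⟨h, h'⟩ | ⟨h, h'⟩ | ⟨h, h', h''⟩ | ⟨h, h', h''⟩
      · exact (h1 w u h'.1 h'.2 h).symm
      · exact h1 u w h'.1 h'.2 h
      · exact (h2 u w h h' h'').symm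
      · exact h2 w u h h' h''
    · intro a b x y hab hbx hxy hax hby hay ⟨hca, hcb⟩
      have hax' : a.val ≠ x.val := fun h => hax (Fin.ext h)
      have hby' : b.val ≠ y.val := fun h => hby (Fin.ext h)
      have hay' : a.val ≠ y.val := fun h => hay (Fin.ext h)
      rcases spider_adj.mp hbx with B | B | B | B
      · -- b is the center, a and x are tops
        rcases spider_adj.mp hab with A | A | A | A
        all_goals try omega
        rcases spider_adj.mp hxy with C | C | C | C
        all_goals try omega
        -- a top, b center, x top, y bottom of x
        exact h3 x a y b B.2.1 B.2.2 A.2.1 A.2.2 (fun h => hax' h.symm) hca.symm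
          C.2.2 B.1 hcb.symm
      · -- x is the center, b and y are tops, a bottom of b
        rcases spider_adj.mp hab with A | A | A | A
        all_goals try omega
        rcases spider_adj.mp hxy with C | C | C | C
        all_goals try omega
        exact h3 b y a x B.2.1 B.2.2 C.2.1 C.2.2 hby' hcb A.2.2 B.1 hca
      · rcases spider_adj.mp hxy with C | C | C | C
        all_goals omega
      · rcases spider_adj.mp hab with A | A | A | A
        all_goals omega

/-! #### The spider is a tree -/

lemma spider_walk_closed {k : ℕ} (S : Set (Fin (2*k+1))) (e : Sym2 (Fin (2*k+1)))
    (hS : ∀ a b, (spider k).Adj a b → a ∈ S → s(a, b) ≠ e → b ∈ S) :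
    ∀ {v w : Fin (2*k+1)} (p : (spider k).Walk v w), v ∈ S → w ∈ S ∨ e ∈ p.edges := by
  intro v w p
  induction p with
  | nil => exact fun h => Or.inl h
  | @cons u x w h q ih =>
    intro hv
    by_cases he : s(u, x) = e
    · right
      rw [SimpleGraph.Walk.edges_cons]
      exact List.mem_cons.mpr (Or.inl he.symm)
    · rcases ih (hS _ _ h hv he) with h' | h'
      · exact Or.inl h'
      · right
        rw [SimpleGraph.Walk.edges_cons]
        exact List.mem_cons.mpr (Or.inr h')

lemma spider_isTree (k : ℕ) : (spider k).IsTree := by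
  constructor
  · -- connected
    have hr : ∀ u : Fin (2*k+1), (spider k).Reachable u ⟨0, by omega⟩ := by
      intro u
      rcases Nat.lt_or_ge u.val 1 with h | h
      · have : u = ⟨0, by omega⟩ := Fin.ext (show u.val = 0 by omega)
        rw [this]
      · rcases le_or_gt u.val k with h' | h'
        · exact (spider_adj.mpr (Or.inr (Or.inl ⟨rfl, h, h'⟩))).reachable
        · have hu := u.isLt
          have hlt : u.val - k < 2*k+1 := by omega
          have ht : (⟨u.val - k, hlt⟩ : Fin (2*k+1)).val = u.val - k := rfl
          have h1 : (spider k).Adj u ⟨u.val - k, hlt⟩ :=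
            spider_adj.mpr (Or.inr (Or.inr (Or.inr ⟨by omega, by omega, by omega⟩)))
          have h2 : (spider k).Adj (⟨u.val - k, hlt⟩ : Fin (2*k+1)) ⟨0, by omega⟩ :=
            spider_adj.mpr (Or.inr (Or.inl ⟨rfl, by omega, by omega⟩))
          exact h1.reachable.trans h2.reachable
    exact SimpleGraph.Connected.mk (fun u v => (hr u).trans (hr v).symm)
  · -- acyclic
    rw [SimpleGraph.isAcyclic_iff_forall_adj_isBridge]
    intro v w hadj
    rw [SimpleGraph.isBridge_iff_adj_and_forall_walk_mem_edges]
    refine fun p => ?_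
    by_contra hne
    rcases spider_adj.mp hadj with H | H | H | H
    · -- v center, w top : S = complement of the leg of w
      have := spider_walk_closed {u | u.val ≠ w.val ∧ u.val ≠ w.val + k} s(v, w) ?_ p ?_
      · rcases this with h | h
        · exact h.1 rfl
        · exact hne h
      · intro a b hab haS habe
        simp only [Set.mem_setOf_eq] at haS ⊢
        have hak := a.isLt
        have hbk := b.isLt
        rcases spider_adj.mp hab with A | A | A | A
        · refine ⟨fun hb => habe ?_, by omega⟩
          rw [show a = v from Fin.ext (by omega), show b = w from Fin.ext (by omega)]
        · exact ⟨by omega, by omega⟩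
        · exact ⟨by omega, by omega⟩
        · exact ⟨by omega, by omega⟩
      · exact ⟨by omega, by omega⟩
    · -- w center, v top : S = the leg of v
      have := spider_walk_closed {u | u.val = v.val ∨ u.val = v.val + k} s(v, w) ?_ p ?_
      · rcases this with h | h
        · simp only [Set.mem_setOf_eq] at h
          omega
        · exact hne h
      · intro a b hab haS habe
        simp only [Set.mem_setOf_eq] at haS ⊢
        have hak := a.isLt
        have hbk := b.isLt
        rcases spider_adj.mp hab with A | A | A | A
        · omega
        · rcases haS with ha | ha
          · exact absurd (by
              rw [show a = v from Fin.ext (by omega), show b = w from Fin.ext (by omega)]) habe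
          · omega
        · omega
        · omega
      · exact Or.inl rfl
    · -- v top, w bottom of v
      have := spider_walk_closed {u | u.val ≠ w.val} s(v, w) ?_ p ?_
      · rcases this with h | h
        · exact h rfl
        · exact hne h
      · intro a b hab haS habe
        simp only [Set.mem_setOf_eq] at haS ⊢
        have hak := a.isLt
        have hbk := b.isLt
        intro hb
        rcases spider_adj.mp hab with A | A | A | A
        · omega
        · omega
        · exact habe (by
            rw [show a = v from Fin.ext (by omega), show b = w from Fin.ext (by omega)])
        · omega
      · simp only [Set.mem_setOf_eq]
        omega
    · -- w top, v bottom of w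
      have := spider_walk_closed {u | u.val = v.val} s(v, w) ?_ p ?_
      · rcases this with h | h
        · simp only [Set.mem_setOf_eq] at h
          omega
        · exact hne h
      · intro a b hab haS habe
        simp only [Set.mem_setOf_eq] at haS ⊢
        have hak := a.isLt
        have hbk := b.isLt
        rcases spider_adj.mp hab with A | A | A | A
        · omega
        · omega
        · omega
        · exact absurd (by
            rw [show a = v from Fin.ext (by omega), show b = w from Fin.ext (by omega)]) habe
      · rfl

end SpiderAux
section SpiderColorings

open Finset

/-- Vertex of the spider with value `j` (for `j ≤ 2k`). -/
def fv (k j : ℕ) : Fin (2*k+1) := ⟨min j (2*k), by omega⟩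

lemma fv_val {k j : ℕ} (h : j ≤ 2*k) : (fv k j).val = j := by
  simp only [fv]
  omega

/-- The stuck (star b-)coloring with `k+1` colors: center gets `0`, top `j` gets `j`,
bottom of leg `1` gets `2`, bottom of leg `2` gets `1`, all other bottoms get `0`. -/
def spiderC0 (k : ℕ) : Fin (2*k+1) → ℕ := fun u =>
  if u.val = 0 then 0 else if u.val ≤ k then u.val
  else if u.val = k+1 then 2 else if u.val = k+2 then 1 else 0

/-- The star coloring with `3` colors. -/
def spiderC1 (k : ℕ) : Fin (2*k+1) → ℕ := fun u =>
  if u.val = 0 then 0 else if u.val ≤ k then 1 else 2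

variable {k : ℕ}

lemma spiderC0_center {z : Fin (2*k+1)} (h : z.val = 0) : spiderC0 k z = 0 := by
  unfold spiderC0
  rw [if_pos h]

lemma spiderC0_top {t : Fin (2*k+1)} (h1 : 1 ≤ t.val) (h2 : t.val ≤ k) :
    spiderC0 k t = t.val := by
  unfold spiderC0
  rw [if_neg (by omega), if_pos h2]

lemma spiderC0_bot1 {b : Fin (2*k+1)} (h : b.val = 1 + k) : spiderC0 k b = 2 := by
  unfold spiderC0
  rw [if_neg (by omega), if_neg (by omega), if_pos (by omega)]

lemma spiderC0_bot2 (hk : 3 ≤ k) {b : Fin (2*k+1)} (h : b.val = 2 + k) : spiderC0 k b = 1 := by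
  unfold spiderC0
  rw [if_neg (by omega), if_neg (by omega), if_neg (by omega), if_pos (by omega)]

lemma spiderC0_bot3 {b : Fin (2*k+1)} {j : ℕ} (h3 : 3 ≤ j)
    (h : b.val = j + k) : spiderC0 k b = 0 := by
  unfold spiderC0
  rw [if_neg (by omega), if_neg (by omega), if_neg (by omega), if_neg (by omega)]

lemma colorsUsed_spiderC0 (hk : 3 ≤ k) : colorsUsed (spiderC0 k) = Finset.range (k+1) := by
  ext j
  simp only [colorsUsed, Finset.mem_image, Finset.mem_univ, true_and, Finset.mem_range]
  constructor
  · rintro ⟨u, rfl⟩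
    unfold spiderC0
    split_ifs <;> omega
  · intro hj
    rcases Nat.eq_zero_or_pos j with h0 | h0
    · refine ⟨fv k 0, ?_⟩
      rw [spiderC0_center (fv_val (by omega))]
      omega
    · refine ⟨fv k j, ?_⟩
      rw [spiderC0_top (by rw [fv_val (by omega)]; omega) (by rw [fv_val (by omega)]; omega),
        fv_val (by omega)]

lemma isStarColoring_spiderC0 (hk : 3 ≤ k) : IsStarColoring (spider k) (spiderC0 k) := by
  rw [isStarColoring_spider_iff]
  refine ⟨?_, ?_, ?_⟩
  · intro t z h1 h2 h0
    rw [spiderC0_top h1 h2, spiderC0_center h0]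
    omega
  · intro t b h1 h2 hb
    rw [spiderC0_top h1 h2]
    rcases Nat.lt_or_ge t.val 3 with h3 | h3
    · rcases (by omega : t.val = 1 ∨ t.val = 2) with h | h
      · rw [spiderC0_bot1 (by omega)]
        omega
      · rw [spiderC0_bot2 hk (by omega)]
        omega
    · rw [spiderC0_bot3 h3 (by omega)]
      omega
  · intro t t' b z h1 h2 h1' h2' hne hc hb h0
    rw [spiderC0_top h1 h2, spiderC0_top h1' h2'] at hc
    omega

lemma isStarBColoring_spiderC0 (hk : 3 ≤ k) : IsStarBColoring (spider k) (spiderC0 k) := by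
  refine ⟨isStarColoring_spiderC0 hk, fun c' hstep => ?_⟩
  obtain ⟨-, hc'star, i, hi, hkeep, hrec⟩ := hstep
  rw [colorsUsed_spiderC0 hk, Finset.mem_range] at hi
  obtain ⟨p1, p2, p3⟩ := (isStarColoring_spider_iff c').mp hc'star
  have hctrv : (fv k 0).val = 0 := fv_val (by omega)
  have hctr0 : spiderC0 k (fv k 0) = 0 := spiderC0_center hctrv
  rcases Nat.eq_zero_or_pos i with hi0 | hi1
  · -- recoloring the class of the center
    obtain ⟨hne0, hmem⟩ := hrec (fv k 0) (by rw [hctr0, hi0])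
    rw [colorsUsed_spiderC0 hk, Finset.mem_range] at hmem
    have h1t : 1 ≤ c' (fv k 0) := by omega
    have h2t : c' (fv k 0) ≤ k := by omega
    have hatv : (fv k (c' (fv k 0))).val = c' (fv k 0) := fv_val (by omega)
    have hkeepat : c' (fv k (c' (fv k 0))) = c' (fv k 0) := by
      rw [hkeep _ (by rw [spiderC0_top (by omega) (by omega), hatv]; omega),
        spiderC0_top (by omega) (by omega), hatv]
    exact p1 (fv k (c' (fv k 0))) (fv k 0) (by omega) (by omega) hctrv hkeepat
  · -- recoloring the class of color i, 1 ≤ i ≤ k : the top vertex a_i is recolored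
    have haiv : (fv k i).val = i := fv_val (by omega)
    obtain ⟨hne0, hmem⟩ := hrec (fv k i) (by rw [spiderC0_top (by omega) (by omega), haiv])
    rw [colorsUsed_spiderC0 hk, Finset.mem_range] at hmem
    have hctr' : c' (fv k 0) = 0 := by
      rw [hkeep _ (by omega), hctr0]
    have ht1 : 1 ≤ c' (fv k i) := by
      rcases Nat.eq_zero_or_pos (c' (fv k i)) with h | h
      · exact absurd (by rw [hctr', h]) (p1 (fv k i) (fv k 0) (by omega) (by omega) hctrv)
      · exact h
    -- t ≥ 3, or i ≥ 3
    have ht3 : 3 ≤ c' (fv k i) ∨ 3 ≤ i := by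
      rcases Nat.lt_or_ge i 3 with h3 | h3
      · left
        rcases (by omega : i = 1 ∨ i = 2) with h | h
        · -- i = 1 : bottom of leg 1 keeps color 2
          have hbv : (fv k (k+1)).val = 1 + k := by rw [fv_val (by omega)]; omega
          have hb1 : c' (fv k (k+1)) = 2 := by
            rw [hkeep _ (by rw [spiderC0_bot1 hbv]; omega), spiderC0_bot1 hbv]
          have := p2 (fv k i) (fv k (k+1)) (by omega) (by omega) (by omega)
          rw [hb1] at this
          omega
        · -- i = 2 : bottom of leg 2 keeps color 1
          have hbv : (fv k (k+2)).val = 2 + k := by rw [fv_val (by omega)]; omega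
          have hb2 : c' (fv k (k+2)) = 1 := by
            rw [hkeep _ (by rw [spiderC0_bot2 hk hbv]; omega), spiderC0_bot2 hk hbv]
          have := p2 (fv k i) (fv k (k+2)) (by omega) (by omega) (by omega)
          rw [hb2] at this
          omega
      · exact Or.inr h3
    -- the top a_t keeps its color t (where t = c' (fv k i))
    have hatv : (fv k (c' (fv k i))).val = c' (fv k i) := fv_val (by omega)
    have hkat : c' (fv k (c' (fv k i))) = c' (fv k i) := by
      rw [hkeep _ (by rw [spiderC0_top (by omega) (by omega), hatv]; omega),
        spiderC0_top (by omega) (by omega), hatv]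
    rcases ht3 with h3 | h3
    · -- the bottom of leg t keeps color 0
      have hbtv : (fv k (c' (fv k i) + k)).val = c' (fv k i) + k := fv_val (by omega)
      have hkbt : c' (fv k (c' (fv k i) + k)) = 0 := by
        rw [hkeep _ (by rw [spiderC0_bot3 h3 hbtv]; omega), spiderC0_bot3 h3 hbtv]
      exact p3 (fv k (c' (fv k i))) (fv k i) (fv k (c' (fv k i) + k)) (fv k 0)
        (by omega) (by omega) (by omega) (by omega) (by omega)
        hkat (by omega) hctrv (by rw [hkbt, hctr'])
    · -- 3 ≤ i : the bottom of leg i keeps color 0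
      have hbiv : (fv k (i + k)).val = i + k := fv_val (by omega)
      have hkbi : c' (fv k (i + k)) = 0 := by
        rw [hkeep _ (by rw [spiderC0_bot3 h3 hbiv]; omega), spiderC0_bot3 h3 hbiv]
      exact p3 (fv k i) (fv k (c' (fv k i))) (fv k (i + k)) (fv k 0)
        (by omega) (by omega) (by omega) (by omega) (by omega)
        hkat.symm (by omega) hctrv (by rw [hkbi, hctr'])

end SpiderColorings
section SpiderMain

open Finset

variable {k : ℕ}

/-- Upper bound: any star b-coloring of the spider uses at most `k+1` colors, since
a color appearing only on bottom vertices could be recolored. -/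
lemma spider_starB_card_le (hk : 3 ≤ k) (c : Fin (2*k+1) → ℕ)
    (hb : IsStarBColoring (spider k) c) : (colorsUsed c).card ≤ k + 1 := by
  obtain ⟨hstar, hstuck⟩ := hb
  by_contra hcard
  push_neg at hcard
  obtain ⟨P1, P2, P3⟩ := (isStarColoring_spider_iff c).mp hstar
  -- every used color appears on the center or a top vertex
  have key : ∀ j ∈ colorsUsed c, ∃ u : Fin (2*k+1), u.val ≤ k ∧ c u = j := by
    intro j hj
    by_contra hno
    push_neg at hno
    have hDne : ∀ u : Fin (2*k+1),
        (colorsUsed c \ {j, c (fv k (u.val - k)), c (fv k 0)}).Nonempty := by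
      intro u
      rw [← Finset.card_pos]
      have h3 : ({j, c (fv k (u.val - k)), c (fv k 0)} : Finset ℕ).card ≤ 3 := by
        apply le_trans (Finset.card_insert_le _ _)
        have h2 := Finset.card_insert_le (c (fv k (u.val - k))) ({c (fv k 0)} : Finset ℕ)
        rw [Finset.card_singleton] at h2
        omega
      have h4 := Finset.le_card_sdiff
        ({j, c (fv k (u.val - k)), c (fv k 0)} : Finset ℕ) (colorsUsed c)
      omega
    set c' : Fin (2*k+1) → ℕ := fun u =>
      if c u = j then (colorsUsed c \ {j, c (fv k (u.val - k)), c (fv k 0)}).min' (hDne u)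
      else c u with hc'def
    have hch : ∀ u, c u ≠ j → c' u = c u := by
      intro u hu
      simp only [hc'def, if_neg hu]
    have hrec : ∀ u, c u = j → c' u ∈ colorsUsed c ∧ c' u ≠ j ∧
        c' u ≠ c (fv k (u.val - k)) ∧ c' u ≠ c (fv k 0) := by
      intro u hu
      have hm := Finset.min'_mem _ (hDne u)
      rw [Finset.mem_sdiff, Finset.mem_insert, Finset.mem_insert, Finset.mem_singleton] at hm
      push_neg at hm
      simp only [hc'def, if_pos hu]
      exact ⟨hm.1, hm.2.1, hm.2.2.1, hm.2.2.2⟩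
    have hc'star : IsStarColoring (spider k) c' := by
      rw [isStarColoring_spider_iff]
      refine ⟨?_, ?_, ?_⟩
      · intro t z h1 h2 h0
        rw [hch t (hno t h2), hch z (hno z (by omega))]
        exact P1 t z h1 h2 h0
      · intro t b h1 h2 hbv
        rw [hch t (hno t h2)]
        by_cases hcb : c b = j
        · have htb : fv k (b.val - k) = t := by
            apply Fin.ext
            rw [fv_val (by omega)]
            omega
          have := (hrec b hcb).2.2.1
          rwa [htb] at this
        · rw [hch b hcb]
          exact P2 t b h1 h2 hbv
      · intro t t' b z h1 h2 h1' h2' hne hc hbv h0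
        rw [hch t (hno t h2), hch t' (hno t' h2')] at hc
        rw [hch z (hno z (by omega))]
        by_cases hcb : c b = j
        · have hz : z = fv k 0 := Fin.ext (by rw [fv_val (by omega)]; omega)
          rw [hz]
          exact (hrec b hcb).2.2.2
        · rw [hch b hcb]
          exact P3 t t' b z h1 h2 h1' h2' hne hc hbv h0
    exact hstuck c' ⟨hstar, hc'star, j, hj, hch, fun u hu =>
      ⟨(hrec u hu).2.1, (hrec u hu).1⟩⟩
  -- hence at most k+1 colors
  have hsub : colorsUsed c ⊆ Finset.image c ((Finset.range (k+1)).image (fv k)) := by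
    intro j hj
    obtain ⟨u, hu, hcu⟩ := key j hj
    refine Finset.mem_image.mpr ⟨u, ?_, hcu⟩
    exact Finset.mem_image.mpr ⟨u.val, Finset.mem_range.mpr (by omega),
      Fin.ext (fv_val (by omega))⟩
  have h1 := Finset.card_le_card hsub
  have h2 := Finset.card_image_le (s := (Finset.range (k+1)).image (fv k)) (f := c)
  have h3 := Finset.card_image_le (s := Finset.range (k+1)) (f := fv k)
  rw [Finset.card_range] at h3
  omega

lemma spider_Sb (hk : 3 ≤ k) : starBChromaticNumber (spider k) = k + 1 := by
  have hmem : k + 1 ∈ {n | ∃ c : Fin (2*k+1) → ℕ,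
      IsStarBColoring (spider k) c ∧ (colorsUsed c).card = n} :=
    ⟨spiderC0 k, isStarBColoring_spiderC0 hk,
      by rw [colorsUsed_spiderC0 hk, Finset.card_range]⟩
  have hub : ∀ n ∈ {n | ∃ c : Fin (2*k+1) → ℕ,
      IsStarBColoring (spider k) c ∧ (colorsUsed c).card = n}, n ≤ k + 1 := by
    rintro n ⟨c, hb, rfl⟩
    exact spider_starB_card_le hk c hb
  exact le_antisymm (csSup_le ⟨k+1, hmem⟩ hub) (le_csSup ⟨k+1, hub⟩ hmem)

lemma isStarColoring_spiderC1 (hk : 3 ≤ k) : IsStarColoring (spider k) (spiderC1 k) := by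
  rw [isStarColoring_spider_iff]
  refine ⟨?_, ?_, ?_⟩
  · intro t z h1 h2 h0
    unfold spiderC1
    rw [if_neg (by omega), if_pos h2, if_pos h0]
    omega
  · intro t b h1 h2 hbv
    unfold spiderC1
    rw [if_neg (by omega), if_neg (by omega), if_neg (by omega), if_pos h2]
    omega
  · intro t t' b z h1 h2 h1' h2' hne hc hbv h0
    unfold spiderC1
    rw [if_neg (by omega), if_neg (by omega), if_pos h0]
    omega

lemma colorsUsed_spiderC1 (hk : 3 ≤ k) : colorsUsed (spiderC1 k) = {0, 1, 2} := by
  ext j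
  simp only [colorsUsed, Finset.mem_image, Finset.mem_univ, true_and, Finset.mem_insert,
    Finset.mem_singleton]
  constructor
  · rintro ⟨u, rfl⟩
    unfold spiderC1
    split_ifs <;> tauto
  · have hv0 : (fv k 0).val = 0 := fv_val (by omega)
    have hv1 : (fv k 1).val = 1 := fv_val (by omega)
    have hv2 : (fv k (k+1)).val = k+1 := fv_val (by omega)
    rintro (rfl | rfl | rfl)
    · exact ⟨fv k 0, by unfold spiderC1; rw [if_pos hv0]⟩
    · exact ⟨fv k 1, by unfold spiderC1; rw [if_neg (by omega), if_pos (by omega)]⟩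
    · exact ⟨fv k (k+1), by unfold spiderC1; rw [if_neg (by omega), if_neg (by omega)]⟩

lemma spider_S_le (hk : 3 ≤ k) : starChromaticNumber (spider k) ≤ 3 :=
  Nat.sInf_le ⟨spiderC1 k, isStarColoring_spiderC1 hk,
    by rw [colorsUsed_spiderC1 hk]; decide⟩

end SpiderMain
/-- **Theorem.** The difference `Sᵦ(T) − S(T)` is unbounded on the class of trees:
for every natural number `M` there is a finite tree `T` with `Sᵦ(T) − S(T) > M`.
In fact, for every `n ≥ 1` there is a tree `Tₙ` with `Sᵦ(Tₙ) = 2n + 2` and `S(Tₙ) ≤ 3`. -/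
theorem starB_sub_star_unbounded_on_trees :
    (∀ M : ℕ, ∃ (m : ℕ) (T : SimpleGraph (Fin m)), T.IsTree ∧
        starChromaticNumber T + M < starBChromaticNumber T) ∧
    ∀ n : ℕ, 1 ≤ n → ∃ (m : ℕ) (T : SimpleGraph (Fin m)), T.IsTree ∧
        starBChromaticNumber T = 2 * n + 2 ∧ starChromaticNumber T ≤ 3 := by
  have main : ∀ n : ℕ, 1 ≤ n → ∃ (m : ℕ) (T : SimpleGraph (Fin m)), T.IsTree ∧
      starBChromaticNumber T = 2 * n + 2 ∧ starChromaticNumber T ≤ 3 := by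
    intro n hn
    refine ⟨2*(2*n+1)+1, spider (2*n+1), spider_isTree _, ?_, spider_S_le (by omega)⟩
    rw [spider_Sb (by omega)]
  constructor
  · intro M
    obtain ⟨m, T, ht, hsb, hs⟩ := main (M+1) (by omega)
    exact ⟨m, T, ht, by omega⟩
  · exact main
end

section
/- Let G and H be finite simple graphs, neither of which is a complete graph, with n_G and n_H vertices respectively. Then the star b-chromatic number of their join satisfies S_b(G ∨ H) = max{ S_b(G) + n_H, S_b(H) + n_G }. -/
/-!
Definitions for star colorings, star recoloring steps, the strict partial order `≺ₛ`,
star b-vertices, the star (b-)chromatic number, star degrees and related notions,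
following Božović, Mesarič Štesl, Peterin,
"On star b-chromatic number of a graph".
-/

variable {V : Type*}

/-! ### Auxiliary lemmas -/

section Aux
open Sum Function

variable {α β : Type*}

@[simp] lemma graphJoin_adj_inl_inl {G : SimpleGraph α} {H : SimpleGraph β} {a b : α} :
    (graphJoin G H).Adj (inl a) (inl b) ↔ G.Adj a b := by
  constructor
  · rintro (⟨x,y,hx,hy,h⟩|⟨x,y,hx,hy,h⟩|⟨x,y,hx,hy⟩|⟨x,y,hx,hy⟩) <;> simp_all
  · exact fun h => Or.inl ⟨a, b, rfl, rfl, h⟩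

@[simp] lemma graphJoin_adj_inr_inr {G : SimpleGraph α} {H : SimpleGraph β} {a b : β} :
    (graphJoin G H).Adj (inr a) (inr b) ↔ H.Adj a b := by
  constructor
  · rintro (⟨x,y,hx,hy,h⟩|⟨x,y,hx,hy,h⟩|⟨x,y,hx,hy⟩|⟨x,y,hx,hy⟩) <;> simp_all
  · exact fun h => Or.inr (Or.inl ⟨a, b, rfl, rfl, h⟩)

@[simp] lemma graphJoin_adj_inl_inr {G : SimpleGraph α} {H : SimpleGraph β} {a : α} {b : β} :
    (graphJoin G H).Adj (inl a) (inr b) :=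
  Or.inr (Or.inr (Or.inl ⟨a, b, rfl, rfl⟩))

@[simp] lemma graphJoin_adj_inr_inl {G : SimpleGraph α} {H : SimpleGraph β} {a : β} {b : α} :
    (graphJoin G H).Adj (inr a) (inl b) :=
  Or.inr (Or.inr (Or.inr ⟨a, b, rfl, rfl⟩))

/-- membership in `colorsUsed`. -/
lemma mem_colorsUsed_iff [Fintype α] {c : α → ℕ} {n : ℕ} :
    n ∈ colorsUsed c ↔ ∃ v, c v = n := by
  simp [colorsUsed]

lemma colorsUsed_card_le [Fintype α] (c : α → ℕ) :
    (colorsUsed c).card ≤ Fintype.card α := by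
  classical
  exact (Finset.card_image_le).trans (by simp)

lemma bddAbove_starB_set [Fintype α] (G : SimpleGraph α) :
    BddAbove {n | ∃ c : α → ℕ, IsStarBColoring G c ∧ (colorsUsed c).card = n} := by
  refine ⟨Fintype.card α, ?_⟩
  rintro n ⟨c, -, rfl⟩
  exact colorsUsed_card_le c

/-- Any injective coloring is a star coloring. -/
lemma isStarColoring_of_injective {G : SimpleGraph α} {c : α → ℕ}
    (hc : Function.Injective c) : IsStarColoring G c := by
  refine ⟨fun u w h => fun he => G.ne_of_adj h (hc he), ?_⟩
  rintro a b x y hab hbx hxy hax hby hay ⟨h1, h2⟩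
  exact hax (hc h1)

/-- After a recoloring step the colors used shrink strictly. -/
lemma colorsUsed_subset_of_step [Fintype α] {G : SimpleGraph α} {c' c : α → ℕ}
    (h : StarRecolorStep G c' c) :
    ∃ i ∈ colorsUsed c, colorsUsed c' ⊆ (colorsUsed c).erase i := by
  obtain ⟨-, -, i, hi, hkeep, hmove⟩ := h
  refine ⟨i, hi, ?_⟩
  intro n hn
  obtain ⟨v, hv⟩ := mem_colorsUsed_iff.1 hn
  by_cases hcv : c v = i
  · obtain ⟨h1, h2⟩ := hmove v hcv
    rw [← hv]
    exact Finset.mem_erase.2 ⟨h1, h2⟩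
  · rw [← hv, hkeep v hcv]
    exact Finset.mem_erase.2 ⟨hcv, mem_colorsUsed_iff.2 ⟨v, rfl⟩⟩

/-- Every finite graph has a star b-coloring. -/
lemma exists_isStarBColoring [Fintype α] (G : SimpleGraph α) :
    ∃ c, IsStarBColoring G c := by
  classical
  have hne : {n | ∃ c : α → ℕ, IsStarColoring G c ∧ (colorsUsed c).card = n}.Nonempty := by
    refine ⟨_, fun v => ((Fintype.equivFin α) v : ℕ), isStarColoring_of_injective ?_, rfl⟩
    intro u v h
    exact (Fintype.equivFin α).injective (Fin.val_injective h)
  obtain ⟨c, hc, hcard⟩ := Nat.sInf_mem hne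
  refine ⟨c, hc, fun c' hstep => ?_⟩
  obtain ⟨i, hi, hsub⟩ := colorsUsed_subset_of_step hstep
  have hlt : (colorsUsed c').card < (colorsUsed c).card := by
    calc (colorsUsed c').card ≤ ((colorsUsed c).erase i).card := Finset.card_le_card hsub
    _ < (colorsUsed c).card := Finset.card_erase_lt_of_mem hi
  have hmem : (colorsUsed c').card ∈
      {n | ∃ c : α → ℕ, IsStarColoring G c ∧ (colorsUsed c).card = n} :=
    ⟨c', hstep.2.1, rfl⟩
  have := Nat.sInf_le hmem
  omega

lemma starB_mem [Fintype α] (G : SimpleGraph α) :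
    starBChromaticNumber G ∈
      {n | ∃ c : α → ℕ, IsStarBColoring G c ∧ (colorsUsed c).card = n} := by
  apply Nat.sSup_mem
  · obtain ⟨c, hc⟩ := exists_isStarBColoring G
    exact ⟨_, c, hc, rfl⟩
  · exact bddAbove_starB_set G

lemma le_starB [Fintype α] {G : SimpleGraph α} {c : α → ℕ} (hc : IsStarBColoring G c) :
    (colorsUsed c).card ≤ starBChromaticNumber G :=
  le_csSup (bddAbove_starB_set G) ⟨c, hc, rfl⟩

end Aux
section Transport
open Function

variable {α β : Type*}

lemma isStarColoring_transport {e : α ≃ β} {G : SimpleGraph α} {G' : SimpleGraph β}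
    (he : ∀ u v, G.Adj u v ↔ G'.Adj (e u) (e v)) {c : β → ℕ}
    (hc : IsStarColoring G' c) : IsStarColoring G (c ∘ e) := by
  obtain ⟨h1, h2⟩ := hc
  refine ⟨fun u w h => h1 ((he u w).1 h), ?_⟩
  intro a b x y hab hbx hxy hax hby hay
  exact h2 (e a) (e b) (e x) (e y) ((he _ _).1 hab) ((he _ _).1 hbx) ((he _ _).1 hxy)
    (fun h => hax (e.injective h)) (fun h => hby (e.injective h)) (fun h => hay (e.injective h))

lemma colorsUsed_transport [Fintype α] [Fintype β] (e : α ≃ β) (c : β → ℕ) :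
    colorsUsed (c ∘ e) = colorsUsed c := by
  ext n
  simp only [mem_colorsUsed_iff, comp_apply]
  exact ⟨fun ⟨v, hv⟩ => ⟨e v, hv⟩, fun ⟨w, hw⟩ => ⟨e.symm w, by simpa using hw⟩⟩

lemma starRecolorStep_transport [Fintype α] [Fintype β] {e : α ≃ β}
    {G : SimpleGraph α} {G' : SimpleGraph β}
    (he : ∀ u v, G.Adj u v ↔ G'.Adj (e u) (e v)) {c' c : β → ℕ}
    (h : StarRecolorStep G' c' c) : StarRecolorStep G (c' ∘ e) (c ∘ e) := by
  obtain ⟨h1, h2, i, hi, hkeep, hmove⟩ := h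
  refine ⟨isStarColoring_transport he h1, isStarColoring_transport he h2, i, ?_, ?_, ?_⟩
  · rwa [colorsUsed_transport]
  · exact fun v hv => hkeep (e v) hv
  · intro v hv
    obtain ⟨ha, hb⟩ := hmove (e v) hv
    exact ⟨ha, by rwa [colorsUsed_transport]⟩

lemma isStarBColoring_transport [Fintype α] [Fintype β] {e : α ≃ β}
    {G : SimpleGraph α} {G' : SimpleGraph β}
    (he : ∀ u v, G.Adj u v ↔ G'.Adj (e u) (e v)) {c : β → ℕ}
    (hc : IsStarBColoring G' c) : IsStarBColoring G (c ∘ e) := by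
  refine ⟨isStarColoring_transport he hc.1, fun d hd => ?_⟩
  have he' : ∀ u v, G'.Adj u v ↔ G.Adj (e.symm u) (e.symm v) := by
    intro u v
    rw [he (e.symm u) (e.symm v)]
    simp
  have := starRecolorStep_transport he' hd
  have hcc : (c ∘ e) ∘ e.symm = c := by ext w; simp
  rw [hcc] at this
  exact hc.2 _ this

lemma starBChromaticNumber_le_transport [Fintype α] [Fintype β] {e : α ≃ β}
    {G : SimpleGraph α} {G' : SimpleGraph β}
    (he : ∀ u v, G.Adj u v ↔ G'.Adj (e u) (e v)) :
    starBChromaticNumber G' ≤ starBChromaticNumber G := by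
  obtain ⟨c, hc, hcard⟩ := starB_mem G'
  rw [← hcard, ← colorsUsed_transport e c]
  exact le_starB (isStarBColoring_transport he hc)

lemma starBChromaticNumber_transport [Fintype α] [Fintype β] {e : α ≃ β}
    {G : SimpleGraph α} {G' : SimpleGraph β}
    (he : ∀ u v, G.Adj u v ↔ G'.Adj (e u) (e v)) :
    starBChromaticNumber G = starBChromaticNumber G' := by
  refine le_antisymm ?_ (starBChromaticNumber_le_transport he)
  have he' : ∀ u v, G'.Adj u v ↔ G.Adj (e.symm u) (e.symm v) := by
    intro u v
    rw [he (e.symm u) (e.symm v)]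
    simp
  exact starBChromaticNumber_le_transport he'

/-- In a non-complete graph, an injective star coloring admits a recoloring step. -/
lemma exists_step_of_injective {α : Type*} [Fintype α] [DecidableEq α] {G : SimpleGraph α}
    (hG : G ≠ ⊤) {c : α → ℕ} (hc : IsStarColoring G c) (hinj : Function.Injective c) :
    ∃ c', StarRecolorStep G c' c := by
  have hxy : ∃ x y : α, x ≠ y ∧ ¬ G.Adj x y := by
    by_contra h
    push_neg at h
    apply hG
    ext u v
    simp only [SimpleGraph.top_adj]
    exact ⟨G.ne_of_adj, fun hne => h u v hne⟩
  obtain ⟨x, y, hxyne, hxyadj⟩ := hxy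
  refine ⟨Function.update c x (c y), hc, ?_, c x, mem_colorsUsed_iff.2 ⟨x, rfl⟩, ?_, ?_⟩
  · -- the updated coloring is a star coloring
    constructor
    · intro u w huw he
      rcases eq_or_ne u x with hu | hu
      · rcases eq_or_ne w x with hw | hw
        · exact G.ne_of_adj huw (hu.trans hw.symm)
        · rw [hu] at he huw
          rw [update_self, update_of_ne hw] at he
          exact hxyadj (by rwa [← hinj he] at huw)
      · rcases eq_or_ne w x with hw | hw
        · rw [hw] at he huw
          rw [update_of_ne hu, update_self] at he
          exact hxyadj (by rw [← hinj he.symm] at huw; exact huw.symm)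
        · rw [update_of_ne hu, update_of_ne hw] at he
          exact G.ne_of_adj huw (hinj he)
    · rintro a b u w hab hbu huw hau hbw haw ⟨h1, h2⟩
      have key : ∀ p q : α, p ≠ q →
          Function.update c x (c y) p = Function.update c x (c y) q →
          (p = x ∧ q = y) ∨ (p = y ∧ q = x) := by
        intro p q hpq hval
        rcases eq_or_ne p x with hp | hp
        · rcases eq_or_ne q x with hq | hq
          · exact absurd (hp.trans hq.symm) hpq
          · rw [hp, update_self, update_of_ne hq] at hval
            exact Or.inl ⟨hp, (hinj hval).symm⟩
        · rcases eq_or_ne q x with hq | hq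
          · rw [update_of_ne hp, hq, update_self] at hval
            exact Or.inr ⟨hinj hval, hq⟩
          · rw [update_of_ne hp, update_of_ne hq] at hval
            exact absurd (hinj hval) hpq
      rcases key a u hau h1 with ⟨ha, -⟩ | ⟨ha, -⟩ <;>
        rcases key b w hbw h2 with ⟨hb, -⟩ | ⟨hb, -⟩ <;> rw [ha, hb] at hab
      · exact G.loopless.irrefl _ hab
      · exact hxyadj hab
      · exact hxyadj hab.symm
      · exact G.loopless.irrefl _ hab
  · intro v hv
    have : v ≠ x := fun h => hv (by rw [h])
    rw [update_of_ne this]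
  · intro v hv
    have hvx : v = x := hinj hv
    subst hvx
    rw [update_self]
    exact ⟨fun h => hxyne (hinj h).symm, mem_colorsUsed_iff.2 ⟨y, rfl⟩⟩

end Transport
section Join
open Sum Function

variable {α β : Type*} {G : SimpleGraph α} {H : SimpleGraph β}

/-- Characterization of star colorings of a join. -/
lemma isStarColoring_join_iff (c : α ⊕ β → ℕ) :
    IsStarColoring (graphJoin G H) c ↔
      IsStarColoring G (c ∘ inl) ∧ IsStarColoring H (c ∘ inr) ∧
      (∀ a b, c (inl a) ≠ c (inr b)) ∧
      ¬((∃ a a', a ≠ a' ∧ c (inl a) = c (inl a')) ∧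
        (∃ b b', b ≠ b' ∧ c (inr b) = c (inr b'))) := by
  constructor
  · rintro ⟨h1, h2⟩
    refine ⟨⟨fun u w h => h1 (graphJoin_adj_inl_inl.2 h), ?_⟩,
            ⟨fun u w h => h1 (graphJoin_adj_inr_inr.2 h), ?_⟩, ?_, ?_⟩
    · intro a b x y hab hbx hxy hax hby hay
      exact h2 (inl a) (inl b) (inl x) (inl y) (graphJoin_adj_inl_inl.2 hab)
        (graphJoin_adj_inl_inl.2 hbx) (graphJoin_adj_inl_inl.2 hxy)
        (by simpa using hax) (by simpa using hby) (by simpa using hay)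
    · intro a b x y hab hbx hxy hax hby hay
      exact h2 (inr a) (inr b) (inr x) (inr y) (graphJoin_adj_inr_inr.2 hab)
        (graphJoin_adj_inr_inr.2 hbx) (graphJoin_adj_inr_inr.2 hxy)
        (by simpa using hax) (by simpa using hby) (by simpa using hay)
    · exact fun a b => h1 graphJoin_adj_inl_inr
    · rintro ⟨⟨a, a', ha, hca⟩, ⟨b, b', hb, hcb⟩⟩
      exact h2 (inl a) (inr b) (inl a') (inr b') graphJoin_adj_inl_inr
        graphJoin_adj_inr_inl graphJoin_adj_inl_inr
        (by simpa using ha) (by simpa using hb) (by simp) ⟨hca, hcb⟩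
  · rintro ⟨⟨hG1, hG2⟩, ⟨hH1, hH2⟩, hd, hnr⟩
    constructor
    · rintro (u | u) (w | w) h
      · exact hG1 (graphJoin_adj_inl_inl.1 h)
      · exact hd u w
      · exact fun he => hd w u he.symm
      · exact hH1 (graphJoin_adj_inr_inr.1 h)
    · rintro (a | a) (b | b) (x | x) (y | y) hab hbx hxy hax hby hay ⟨h1, h2⟩
      -- cross-colored pairs are impossible by `hd`; remaining cases split as in the text
      · exact hG2 a b x y (graphJoin_adj_inl_inl.1 hab) (graphJoin_adj_inl_inl.1 hbx)
          (graphJoin_adj_inl_inl.1 hxy) (by simpa using hax) (by simpa using hby)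
          (by simpa using hay) ⟨h1, h2⟩
      · exact hd b y h2
      · exact hd a x h1
      · exact hd a x h1
      · exact hd y b h2.symm
      · exact hnr ⟨⟨a, x, by simpa using hax, h1⟩, ⟨b, y, by simpa using hby, h2⟩⟩
      · exact hd a x h1
      · exact hd a x h1
      · exact hd x a h1.symm
      · exact hd x a h1.symm
      · exact hnr ⟨⟨b, y, by simpa using hby, h2⟩, ⟨a, x, by simpa using hax, h1⟩⟩
      · exact hd b y h2
      · exact hd x a h1.symm
      · exact hd x a h1.symm
      · exact hd y b h2.symm
      · exact hH2 a b x y (graphJoin_adj_inr_inr.1 hab) (graphJoin_adj_inr_inr.1 hbx)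
          (graphJoin_adj_inr_inr.1 hxy) (by simpa using hax) (by simpa using hby)
          (by simpa using hay) ⟨h1, h2⟩

end Join
section Key
open Sum Function

variable {α β : Type*} [Fintype α] [Fintype β] {G : SimpleGraph α} {H : SimpleGraph β}

lemma colorsUsed_sum (c : α ⊕ β → ℕ) :
    colorsUsed c = colorsUsed (c ∘ inl) ∪ colorsUsed (c ∘ inr) := by
  ext n
  simp only [Finset.mem_union, mem_colorsUsed_iff, comp_apply]
  constructor
  · rintro ⟨v | v, hv⟩
    · exact Or.inl ⟨v, hv⟩
    · exact Or.inr ⟨v, hv⟩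
  · rintro (⟨v, hv⟩ | ⟨v, hv⟩)
    · exact ⟨inl v, hv⟩
    · exact ⟨inr v, hv⟩

lemma colorsUsed_sum_card (c : α ⊕ β → ℕ) (hd : ∀ a b, c (inl a) ≠ c (inr b)) :
    (colorsUsed c).card = (colorsUsed (c ∘ inl)).card + (colorsUsed (c ∘ inr)).card := by
  rw [colorsUsed_sum]
  apply Finset.card_union_of_disjoint
  rw [Finset.disjoint_left]
  rintro n hn hn'
  obtain ⟨a, ha⟩ := mem_colorsUsed_iff.1 hn
  obtain ⟨b, hb⟩ := mem_colorsUsed_iff.1 hn'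
  exact hd a b (ha.trans hb.symm)

lemma colorsUsed_card_of_injective (c : β → ℕ) (hinj : Function.Injective c) :
    (colorsUsed c).card = Fintype.card β := by
  classical
  rw [colorsUsed, Finset.card_image_of_injective _ hinj, Finset.card_univ]

/-- Key upper bound: a star b-coloring of the join which is rainbow on the `β` side
uses at most `Sᵦ(G) + |β|` colors. -/
lemma key_upper {c : α ⊕ β → ℕ} (hc : IsStarBColoring (graphJoin G H) c)
    (hinj : Function.Injective (c ∘ inr)) :
    (colorsUsed c).card ≤ starBChromaticNumber G + Fintype.card β := by
  obtain ⟨hGc, hHc, hd, hnr⟩ := (isStarColoring_join_iff c).1 hc.1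
  have hBG : IsStarBColoring G (c ∘ inl) := by
    refine ⟨hGc, fun d hstep => ?_⟩
    obtain ⟨-, hg', i, hi, hkeep, hmove⟩ := hstep
    -- colors used by d sit inside those used by `c ∘ inl`
    have hdsub : ∀ a, d a ∈ colorsUsed (c ∘ inl) := by
      intro a
      by_cases hca : (c ∘ inl) a = i
      · exact (hmove a hca).2
      · rw [hkeep a hca]; exact mem_colorsUsed_iff.2 ⟨a, rfl⟩
    set c'' : α ⊕ β → ℕ := Sum.elim d (c ∘ inr) with hc''
    have hc''l : c'' ∘ inl = d := rfl
    have hc''r : c'' ∘ inr = c ∘ inr := rfl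
    have hstar : IsStarColoring (graphJoin G H) c'' := by
      rw [isStarColoring_join_iff]
      refine ⟨hg', hHc, ?_, ?_⟩
      · intro a b
        obtain ⟨a', ha'⟩ := mem_colorsUsed_iff.1 (hdsub a)
        exact fun h => hd a' b (ha'.trans h)
      · rintro ⟨-, ⟨b, b', hb, hcb⟩⟩
        exact hb (hinj hcb)
    apply hc.2 c''
    refine ⟨hc.1, hstar, i, ?_, ?_, ?_⟩
    · obtain ⟨a, ha⟩ := mem_colorsUsed_iff.1 hi
      exact mem_colorsUsed_iff.2 ⟨inl a, ha⟩
    · rintro (v | v) hv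
      · exact hkeep v hv
      · rfl
    · rintro (v | v) hv
      · obtain ⟨h1, h2⟩ := hmove v hv
        refine ⟨h1, ?_⟩
        obtain ⟨a, ha⟩ := mem_colorsUsed_iff.1 h2
        exact mem_colorsUsed_iff.2 ⟨inl a, ha⟩
      · -- impossible: i is a color on the `α` side
        obtain ⟨a, ha⟩ := mem_colorsUsed_iff.1 hi
        exact absurd (ha.trans hv.symm) (hd a v)
  calc (colorsUsed c).card
      = (colorsUsed (c ∘ inl)).card + (colorsUsed (c ∘ inr)).card := colorsUsed_sum_card c hd
    _ ≤ starBChromaticNumber G + Fintype.card β := by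
        have := colorsUsed_card_of_injective (c ∘ inr) hinj
        have := le_starB hBG
        omega

/-- Key lower bound. -/
lemma key_lower (hG : G ≠ ⊤) :
    starBChromaticNumber G + Fintype.card β ≤ starBChromaticNumber (graphJoin G H) := by
  classical
  obtain ⟨cG, hcG, hcard⟩ := starB_mem G
  -- `cG` is not injective
  have hninj : ¬ Function.Injective cG := by
    intro hinj
    obtain ⟨c', hc'⟩ := exists_step_of_injective hG hcG.1 hinj
    exact hcG.2 c' hc'
  obtain ⟨a1, a2, hcga, ha12⟩ := Function.not_injective_iff.1 hninj
  -- a strictly larger fresh color for each vertex of `β`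
  set M : ℕ := (colorsUsed cG).sup id + 1 with hM
  set eb : β → ℕ := fun b => M + (Fintype.equivFin β b) with heb
  have hebinj : Function.Injective eb := by
    intro b b' h
    simp only [heb] at h
    exact (Fintype.equivFin β).injective (Fin.val_injective (by omega))
  have hdisj : ∀ (a : α) (b : β), cG a ≠ eb b := by
    intro a b h
    have h1 : cG a ≤ (colorsUsed cG).sup id :=
      Finset.le_sup (f := id) (mem_colorsUsed_iff.2 ⟨a, rfl⟩)
    have h2 : M ≤ eb b := Nat.le_add_right _ _
    omega
  set c : α ⊕ β → ℕ := Sum.elim cG eb with hcdef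
  have hcl : c ∘ inl = cG := rfl
  have hcr : c ∘ inr = eb := rfl
  have hstar : IsStarColoring (graphJoin G H) c := by
    rw [isStarColoring_join_iff]
    refine ⟨hcG.1, isStarColoring_of_injective hebinj, hdisj, ?_⟩
    rintro ⟨-, ⟨b, b', hb, hcb⟩⟩
    exact hb (hebinj hcb)
  have hB : IsStarBColoring (graphJoin G H) c := by
    refine ⟨hstar, fun c' hstep => ?_⟩
    obtain ⟨-, hc', i, hi, hkeep, hmove⟩ := hstep
    obtain ⟨hG', hH', hd', hnr'⟩ := (isStarColoring_join_iff c').1 hc'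
    obtain ⟨v0, hv0⟩ := mem_colorsUsed_iff.1 hi
    rcases v0 with a0 | b0
    · -- the removed color is on the `α` side: induce a step in `G`
      apply hcG.2 (c' ∘ inl)
      refine ⟨hcG.1, hG', i, mem_colorsUsed_iff.2 ⟨a0, hv0⟩, ?_, ?_⟩
      · exact fun a ha => hkeep (inl a) ha
      · intro a ha
        obtain ⟨h1, h2⟩ := hmove (inl a) ha
        refine ⟨h1, ?_⟩
        obtain ⟨v, hv⟩ := mem_colorsUsed_iff.1 h2
        rcases v with a' | b'
        · exact mem_colorsUsed_iff.2 ⟨a', hv⟩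
        · -- impossible: `c' (inl a)` would equal the color of `inr b'`, adjacent
          exfalso
          have hb' : c (inr b') ≠ i := fun h => hdisj a0 b' (hv0.trans h.symm)
          have : c' (inr b') = c (inr b') := hkeep (inr b') hb'
          exact hc'.1 (graphJoin_adj_inl_inr (a := a) (b := b')) (by rw [this, hv])
    · -- the removed color is on the `β` side
      obtain ⟨h1, h2⟩ := hmove (inr b0) hv0
      obtain ⟨v, hv⟩ := mem_colorsUsed_iff.1 h2
      rcases v with a' | b1
      · -- a `G`-side color: contradiction with properness across the join
        have ha' : c (inl a') ≠ i := by
          rw [← hv0]; exact fun h => hdisj a' b0 h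
        have : c' (inl a') = c (inl a') := hkeep (inl a') ha'
        exact hc'.1 (graphJoin_adj_inl_inr (a := a') (b := b0)).symm (by rw [this, hv])
      · -- another `β`-side color: double repeat, contradiction with star property
        have hb1 : b1 ≠ b0 := by
          intro h
          subst h
          exact h1 (hv ▸ hv0)
        have hb1i : c (inr b1) ≠ i := by
          rw [← hv0]
          intro h
          exact hb1 (hebinj h)
        have hc'b1 : c' (inr b1) = c (inr b1) := hkeep (inr b1) hb1i
        -- repeat on the α side, in c'
        have hzG : ∀ a, cG a ≠ i := by
          intro a h
          exact hdisj a b0 (h.trans hv0.symm)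
        have h1' : c' (inl a1) = cG a1 := hkeep (inl a1) (hzG a1)
        have h2' : c' (inl a2) = cG a2 := hkeep (inl a2) (hzG a2)
        apply hnr'
        refine ⟨⟨a1, a2, ha12, by rw [h1', h2', hcga]⟩, ⟨b0, b1, Ne.symm hb1, ?_⟩⟩
        rw [hc'b1, ← hv]
  have hmem : (colorsUsed c).card ∈
      {n | ∃ c : α ⊕ β → ℕ, IsStarBColoring (graphJoin G H) c ∧ (colorsUsed c).card = n} :=
    ⟨c, hB, rfl⟩
  have hcc : (colorsUsed c).card = starBChromaticNumber G + Fintype.card β := by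
    rw [colorsUsed_sum_card c hdisj, hcl, hcr, hcard,
      colorsUsed_card_of_injective eb hebinj]
  rw [← hcc]
  exact le_csSup (bddAbove_starB_set _) hmem

end Key
/-- **Theorem (star b-chromatic number of joins).** For finite simple graphs `G` and `H`,
neither of which is complete,
`Sᵦ(G ∨ H) = max (Sᵦ(G) + n_H) (Sᵦ(H) + n_G)`. -/
theorem starBChromaticNumber_join {α β : Type*} [Fintype α] [Fintype β]
    (G : SimpleGraph α) (H : SimpleGraph β) (hG : G ≠ ⊤) (hH : H ≠ ⊤) :
    starBChromaticNumber (graphJoin G H) =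
      max (starBChromaticNumber G + Fintype.card β)
          (starBChromaticNumber H + Fintype.card α) := by
  classical
  have hswap : ∀ (u v : β ⊕ α), (graphJoin H G).Adj u v ↔
      (graphJoin G H).Adj ((Equiv.sumComm β α) u) ((Equiv.sumComm β α) v) := by
    rintro (u | u) (v | v) <;> simp
  have hJJ : starBChromaticNumber (graphJoin H G) = starBChromaticNumber (graphJoin G H) :=
    starBChromaticNumber_transport hswap
  refine le_antisymm ?_ (max_le (key_lower hG) (by rw [← hJJ]; exact key_lower hH))
  have hne : {n | ∃ c : α ⊕ β → ℕ,
      IsStarBColoring (graphJoin G H) c ∧ (colorsUsed c).card = n}.Nonempty := by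
    obtain ⟨c, hc⟩ := exists_isStarBColoring (graphJoin G H)
    exact ⟨_, c, hc, rfl⟩
  refine csSup_le hne ?_
  rintro n ⟨c, hc, rfl⟩
  obtain ⟨hGc, hHc, hd, hnr⟩ := (isStarColoring_join_iff c).1 hc.1
  rcases not_and_or.1 hnr with hP | hQ
  · -- the `α` side is rainbow: use the bound with `H`
    set c2 : β ⊕ α → ℕ := c ∘ (Equiv.sumComm β α) with hc2
    have hB2 : IsStarBColoring (graphJoin H G) c2 := isStarBColoring_transport hswap hc
    have hinj : Function.Injective (c2 ∘ Sum.inr) := by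
      intro a a' h
      by_contra hne'
      exact hP ⟨a, a', hne', h⟩
    have hle := key_upper hB2 hinj
    rw [hc2, colorsUsed_transport] at hle
    exact le_trans hle (le_max_right _ _)
  · -- the `β` side is rainbow: use the bound with `G`
    have hinj : Function.Injective (c ∘ Sum.inr) := by
      intro b b' h
      by_contra hne'
      exact hQ ⟨b, b', hne', h⟩
    exact le_trans (key_upper hc hinj) (le_max_left _ _)
end

section
/- Let G be a finite simple graph and let K_q be the complete graph on q vertices. Then the star b-chromatic number of the join satisfies S_b(G ∨ K_q) = S_b(G) + q. -/
/-!
Definitions for star colorings, star recoloring steps, the strict partial order `≺ₛ`,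
star b-vertices, the star (b-)chromatic number, star degrees and related notions,
following Božović, Mesarič Štesl, Peterin,
"On star b-chromatic number of a graph".
-/

variable {V : Type*}

section Auxiliary

open Finset

variable {α β : Type*}

lemma mem_colorsUsed {W : Type*} [Fintype W] {c : W → ℕ} {j : ℕ} :
    j ∈ colorsUsed c ↔ ∃ v, c v = j := by
  simp [colorsUsed]

lemma join_adj_inl_inl {G : SimpleGraph α} {H : SimpleGraph β} {a b : α} :
    (graphJoin G H).Adj (Sum.inl a) (Sum.inl b) ↔ G.Adj a b := by
  constructor
  · rintro (⟨x,y,hx,hy,h⟩|⟨x,y,hx,hy,h⟩|⟨x,y,hx,hy⟩|⟨x,y,hx,hy⟩) <;> simp_all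
  · intro h; exact Or.inl ⟨a, b, rfl, rfl, h⟩

lemma join_adj_inr_inr {G : SimpleGraph α} {H : SimpleGraph β} {a b : β} :
    (graphJoin G H).Adj (Sum.inr a) (Sum.inr b) ↔ H.Adj a b := by
  constructor
  · rintro (⟨x,y,hx,hy,h⟩|⟨x,y,hx,hy,h⟩|⟨x,y,hx,hy⟩|⟨x,y,hx,hy⟩) <;> simp_all
  · intro h; exact Or.inr (Or.inl ⟨a, b, rfl, rfl, h⟩)

lemma join_adj_inl_inr {G : SimpleGraph α} {H : SimpleGraph β} (a : α) (b : β) :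
    (graphJoin G H).Adj (Sum.inl a) (Sum.inr b) :=
  Or.inr (Or.inr (Or.inl ⟨a, b, rfl, rfl⟩))

lemma join_adj_inr_inl {G : SimpleGraph α} {H : SimpleGraph β} (a : β) (b : α) :
    (graphJoin G H).Adj (Sum.inr a) (Sum.inl b) :=
  Or.inr (Or.inr (Or.inr ⟨a, b, rfl, rfl⟩))

lemma restrict_star {G : SimpleGraph α} {H : SimpleGraph β} {c : α ⊕ β → ℕ}
    (hc : IsStarColoring (graphJoin G H) c) : IsStarColoring G (c ∘ Sum.inl) := by
  refine ⟨fun u w h => hc.1 (join_adj_inl_inl.mpr h), ?_⟩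
  intro a b x y hab hbx hxy hax hby hay
  exact hc.2 (Sum.inl a) (Sum.inl b) (Sum.inl x) (Sum.inl y)
    (join_adj_inl_inl.mpr hab) (join_adj_inl_inl.mpr hbx) (join_adj_inl_inl.mpr hxy)
    (by simpa using hax) (by simpa using hby) (by simpa using hay)

lemma extend_star {G : SimpleGraph α} {q : ℕ} {c : α → ℕ} {d : Fin q → ℕ}
    (hc : IsStarColoring G c) (hd : Function.Injective d)
    (hdis : ∀ a r, c a ≠ d r) :
    IsStarColoring (graphJoin G (⊤ : SimpleGraph (Fin q))) (Sum.elim c d) := by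
  have key : ∀ u w : α ⊕ Fin q, Sum.elim c d u = Sum.elim c d w → u ≠ w →
      ∃ a a', u = Sum.inl a ∧ w = Sum.inl a' := by
    rintro (a|r) (a'|r') h hne
    · exact ⟨a, a', rfl, rfl⟩
    · exact absurd h (hdis a r')
    · exact absurd h.symm (hdis a' r)
    · exact absurd (congrArg Sum.inr (hd h)) hne
  constructor
  · rintro (a|r) (a'|r') h
    · exact hc.1 (join_adj_inl_inl.mp h)
    · exact hdis a r'
    · exact fun h' => hdis a' r h'.symm
    · have : r ≠ r' := by simpa using join_adj_inr_inr.mp h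
      exact fun h' => this (hd h')
  · intro u b x w hub hbx hxw hux hbw huw h
    obtain ⟨h1, h2⟩ := h
    obtain ⟨a1, a2, rfl, rfl⟩ := key u x h1 hux
    obtain ⟨b1, b2, rfl, rfl⟩ := key b w h2 hbw
    exact hc.2 a1 b1 a2 b2 (join_adj_inl_inl.mp hub) (join_adj_inl_inl.mp hbx)
      (join_adj_inl_inl.mp hxw) (by simpa using hux) (by simpa using hbw)
      (by simpa using huw) ⟨h1, h2⟩

lemma colorsUsed_step_lt {W : Type*} [Fintype W] {G : SimpleGraph W} {c' c : W → ℕ}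
    (h : StarRecolorStep G c' c) : (colorsUsed c').card < (colorsUsed c).card := by
  obtain ⟨_, _, i, hi, hk, hr⟩ := h
  have hsub : colorsUsed c' ⊆ (colorsUsed c).erase i := by
    intro j hj
    obtain ⟨v, rfl⟩ := mem_colorsUsed.mp hj
    rw [Finset.mem_erase]
    by_cases hv : c v = i
    · exact ⟨(hr v hv).1, (hr v hv).2⟩
    · rw [hk v hv]; exact ⟨hv, mem_colorsUsed.mpr ⟨v, rfl⟩⟩
  calc (colorsUsed c').card ≤ ((colorsUsed c).erase i).card := Finset.card_le_card hsub
    _ < (colorsUsed c).card := Finset.card_erase_lt_of_mem hi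

lemma exists_starB {W : Type*} [Fintype W] (G : SimpleGraph W) :
    ∃ c : W → ℕ, IsStarBColoring G c := by
  classical
  have start : ∃ c : W → ℕ, IsStarColoring G c := by
    refine ⟨fun v => (Fintype.equivFin W v : ℕ), ?_, ?_⟩
    · intro u w h he
      exact G.ne_of_adj h (by
        have := Fin.val_injective he
        exact (Fintype.equivFin W).injective this)
    · intro a b x y _ _ _ hax _ _ hc
      exact hax ((Fintype.equivFin W).injective (Fin.val_injective hc.1))
  obtain ⟨c0, hc0⟩ := start
  suffices H : ∀ n (c : W → ℕ), IsStarColoring G c → (colorsUsed c).card ≤ n →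
      ∃ c : W → ℕ, IsStarBColoring G c from H _ c0 hc0 le_rfl
  intro n
  induction n with
  | zero =>
    intro c hc hcard
    refine ⟨c, hc, fun c' hstep => ?_⟩
    have := colorsUsed_step_lt hstep; omega
  | succ n ih =>
    intro c hc hcard
    by_cases h : ∃ c', StarRecolorStep G c' c
    · obtain ⟨c', hc'⟩ := h
      exact ih c' hc'.2.1 (by have := colorsUsed_step_lt hc'; omega)
    · exact ⟨c, hc, fun c' hs => h ⟨c', hs⟩⟩

lemma colorsUsed_elim_eq [Fintype α] {q : ℕ} (c : α → ℕ) (d : Fin q → ℕ) :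
    colorsUsed (Sum.elim c d) = colorsUsed c ∪ Finset.image d Finset.univ := by
  ext j
  simp only [mem_colorsUsed, Finset.mem_union, Finset.mem_image, Finset.mem_univ, true_and,
    Sum.exists, Sum.elim_inl, Sum.elim_inr]

lemma colorsUsed_elim_card [Fintype α] {q : ℕ} (c : α → ℕ) (d : Fin q → ℕ)
    (hd : Function.Injective d) (hdis : ∀ a r, c a ≠ d r) :
    (colorsUsed (Sum.elim c d)).card = (colorsUsed c).card + q := by
  have hdisj : Disjoint (colorsUsed c) (Finset.image d Finset.univ) := by
    rw [Finset.disjoint_left]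
    intro j hj hj'
    obtain ⟨a, rfl⟩ := mem_colorsUsed.mp hj
    obtain ⟨r, _, hr⟩ := Finset.mem_image.mp hj'
    exact hdis a r hr.symm
  rw [colorsUsed_elim_eq, Finset.card_union_of_disjoint hdisj,
    Finset.card_image_of_injective _ hd, Finset.card_univ, Fintype.card_fin]

lemma starB_bddAbove {W : Type*} [Fintype W] (G : SimpleGraph W) :
    BddAbove {n | ∃ c : W → ℕ, IsStarBColoring G c ∧ (colorsUsed c).card = n} := by
  refine ⟨Fintype.card W, fun n hn => ?_⟩
  obtain ⟨c, _, rfl⟩ := hn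
  simpa [colorsUsed] using (Finset.card_image_le (s := (Finset.univ : Finset W)) (f := c))

end Auxiliary

/-- **Theorem (join with a complete graph).** For every finite simple graph `G` and the
complete graph `K_q` on `q` vertices, `Sᵦ(G ∨ K_q) = Sᵦ(G) + q`. -/
theorem starBChromaticNumber_join_complete {α : Type*} [Fintype α]
    (G : SimpleGraph α) (q : ℕ) :
    starBChromaticNumber (graphJoin G (⊤ : SimpleGraph (Fin q))) =
      starBChromaticNumber G + q := by
  classical
  apply le_antisymm
  · -- `≤` : restrict a star-b-coloring of the join to `G`
    apply csSup_le'
    rintro m ⟨c, ⟨hc, hmin⟩, hcard⟩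
    have hrest : IsStarColoring G (c ∘ Sum.inl) := restrict_star hc
    have hdisj₀ : ∀ (r : Fin q) (a : α), c (Sum.inr r) ≠ c (Sum.inl a) :=
      fun r a => hc.1 (join_adj_inr_inl r a)
    have hnotin : ∀ r : Fin q, c (Sum.inr r) ∉ colorsUsed (c ∘ Sum.inl) := by
      intro r hmem
      obtain ⟨a, ha⟩ := mem_colorsUsed.mp hmem
      exact hdisj₀ r a ha.symm
    have hinj : Function.Injective (c ∘ Sum.inr) := by
      intro r r' h
      by_contra hne
      exact hc.1 (join_adj_inr_inr.mpr (by simpa using hne)) h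
    -- the restriction is a star-b-coloring of G
    have hGB : IsStarBColoring G (c ∘ Sum.inl) := by
      refine ⟨hrest, fun c' hstep => ?_⟩
      obtain ⟨_, hc', i, hi, hkeep, hrec⟩ := hstep
      have hc'mem : ∀ a, c' a ∈ colorsUsed (c ∘ Sum.inl) := by
        intro a
        by_cases h : (c ∘ Sum.inl) a = i
        · exact (hrec a h).2
        · rw [hkeep a h]; exact mem_colorsUsed.mpr ⟨a, rfl⟩
      have hdis' : ∀ a r, c' a ≠ (c ∘ Sum.inr) r := by
        intro a r h
        have : (c ∘ Sum.inr) r ∈ colorsUsed (c ∘ Sum.inl) := by rw [← h]; exact hc'mem a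
        exact hnotin r this
      refine hmin (Sum.elim c' (c ∘ Sum.inr)) ⟨hc, extend_star hc' hinj hdis', i, ?_, ?_, ?_⟩
      · obtain ⟨a, ha⟩ := mem_colorsUsed.mp hi
        exact mem_colorsUsed.mpr ⟨Sum.inl a, ha⟩
      · rintro (a|r) h
        · exact hkeep a h
        · rfl
      · rintro (a|r) h
        · obtain ⟨h1, h2⟩ := hrec a h
          refine ⟨h1, ?_⟩
          obtain ⟨a', ha'⟩ := mem_colorsUsed.mp h2
          exact mem_colorsUsed.mpr ⟨Sum.inl a', ha'⟩
        · exact absurd (h ▸ hi) (hnotin r)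
    have hle : (colorsUsed (c ∘ Sum.inl)).card ≤ starBChromaticNumber G :=
      le_csSup (starB_bddAbove G) ⟨c ∘ Sum.inl, hGB, rfl⟩
    have hm : m = (colorsUsed (c ∘ Sum.inl)).card + q := by
      rw [← hcard, ← Sum.elim_comp_inl_inr c]
      exact colorsUsed_elim_card _ _ hinj (fun a r h => hdisj₀ r a h.symm)
    omega
  · -- `≥` : extend an optimal star-b-coloring of G with q fresh colors
    obtain ⟨c₁, hc₁⟩ := exists_starB G
    have hne : {n | ∃ c : α → ℕ, IsStarBColoring G c ∧ (colorsUsed c).card = n}.Nonempty :=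
      ⟨_, c₁, hc₁, rfl⟩
    obtain ⟨c, hcB, hcard⟩ := Nat.sSup_mem hne (starB_bddAbove G)
    set M : ℕ := (colorsUsed c).sup id + 1 with hM
    set d : Fin q → ℕ := fun r => M + r with hdDef
    have hd : Function.Injective d := by
      intro r r' h
      have : (r : ℕ) = r' := by simpa [hdDef] using h
      exact Fin.val_injective this
    have hdis : ∀ a r, c a ≠ d r := by
      intro a r h
      have h1 : c a ≤ (colorsUsed c).sup id :=
        Finset.le_sup (f := id) (mem_colorsUsed.mpr ⟨a, rfl⟩)
      have h2 : d r = M + r := rfl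
      omega
    have hstar := extend_star hcB.1 hd hdis
    have hdnot : ∀ r, d r ∉ colorsUsed c := by
      intro r hmem
      obtain ⟨a, ha⟩ := mem_colorsUsed.mp hmem
      exact hdis a r ha
    -- the extension admits no star recoloring step
    have hnostep : ∀ c'', ¬ StarRecolorStep (graphJoin G (⊤ : SimpleGraph (Fin q))) c''
        (Sum.elim c d) := by
      rintro c'' ⟨h1, h2, i, hi, hkeep, hrec⟩
      obtain ⟨v, hv⟩ := mem_colorsUsed.mp hi
      rcases v with a | r
      · -- i is a colour of G : build a recoloring step on G, contradiction
        have hiG : i ∈ colorsUsed c := mem_colorsUsed.mpr ⟨a, hv⟩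
        refine hcB.2 (c'' ∘ Sum.inl) ⟨hcB.1, restrict_star h2, i, hiG, ?_, ?_⟩
        · intro u hu
          exact hkeep (Sum.inl u) hu
        · intro u hu
          obtain ⟨hne', hmem'⟩ := hrec (Sum.inl u) hu
          refine ⟨hne', ?_⟩
          obtain ⟨w, hw⟩ := mem_colorsUsed.mp hmem'
          rcases w with a' | r
          · exact mem_colorsUsed.mpr ⟨a', hw⟩
          · -- the recolored G-vertex would share a fresh colour with a K_q vertex
            exfalso
            have hdr : (Sum.elim c d) (Sum.inr r) ≠ i := by
              simp only [Sum.elim_inr]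
              intro h
              exact hdnot r (h.symm ▸ hiG)
            have := hkeep (Sum.inr r) hdr
            have hadj : (graphJoin G (⊤ : SimpleGraph (Fin q))).Adj (Sum.inl u) (Sum.inr r) :=
              join_adj_inl_inr u r
            exact h2.1 hadj (by rw [this]; exact hw.symm ▸ rfl)
      · -- i is a fresh colour : the K_q vertex cannot be recolored at all
        obtain ⟨hne', hmem'⟩ := hrec (Sum.inr r) hv
        obtain ⟨w, hw⟩ := mem_colorsUsed.mp hmem'
        rcases w with a' | r'
        · have hca' : (Sum.elim c d) (Sum.inl a') ≠ i := by
            simp only [Sum.elim_inl]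
            intro h
            have hvi : d r = i := hv
            exact hdis a' r (h.trans hvi.symm)
          have := hkeep (Sum.inl a') hca'
          exact h2.1 (join_adj_inr_inl r a') (by rw [this]; exact hw.symm)
        · have hrr' : r' ≠ r := by
            intro h
            subst h
            exact hne' (hw ▸ hv ▸ rfl)
          have hdr' : (Sum.elim c d) (Sum.inr r') ≠ i := by
            simp only [Sum.elim_inr]
            intro h
            have hvi : d r = i := hv
            exact hrr' (hd (h.trans hvi.symm))
          have := hkeep (Sum.inr r') hdr'
          have hadj : (graphJoin G (⊤ : SimpleGraph (Fin q))).Adj (Sum.inr r') (Sum.inr r) :=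
            join_adj_inr_inr.mpr (by simpa using hrr')
          exact h2.1 hadj (by rw [this]; exact hw)
    have hcardJ : (colorsUsed (Sum.elim c d)).card = starBChromaticNumber G + q := by
      rw [colorsUsed_elim_card c d hd hdis, hcard]
      rfl
    exact le_csSup (starB_bddAbove _) ⟨Sum.elim c d, ⟨hstar, hnostep⟩, hcardJ⟩
end
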